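/- For a finite-horizon MDP, behavior policy π with full support, target policy π', and any bounded function b: S → ℝ with the convention b(s_{T+1}) = 0, the estimator Ĵ(π') = b(s_0) + Σ_{t=0}^T γ^t ρ_{[0:t]} (r_t - b(s_t) + γ b(s_{t+1})), where ρ_{[0:t]} = Π_{t'=0}^t π'(a_{t'}|s_{t'})/π(a_{t'}|s_{t'}), is an unbiased estimator of J(π') when trajectories are generated by π. -/

import Mathlib

set_option maxHeartbeats 1000000

open Finset

/-- A finite episodic MDP `M = (S, A, P, R, T, γ, s₀)` with finitely supported
reward distribution: `Rd s a` is a distribution over reward outcomes `Rw`,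
whose real value is `rval`. -/
structure FinMDP (S A Rw : Type) where
  T : ℕ
  γ : ℝ
  s0 : S
  P : S → A → S → ℝ
  Rd : S → A → Rw → ℝ
  rval : Rw → ℝ

variable {S A Rw : Type} [Fintype S] [Fintype A] [Fintype Rw] [DecidableEq S] [DecidableEq A]

/-- `π s a` is a probability distribution over actions for each state. -/
def IsPolicy (π : S → A → ℝ) : Prop := (∀ s a, 0 ≤ π s a) ∧ (∀ s, ∑ a, π s a = 1)

namespace FinMDP

/-- the transition and reward functions are genuine probability distributions. -/
def Valid (M : FinMDP S A Rw) : Prop :=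
  (∀ s a s', 0 ≤ M.P s a s') ∧ (∀ s a, ∑ s', M.P s a s' = 1) ∧
  (∀ s a r, 0 ≤ M.Rd s a r) ∧ (∀ s a, ∑ r, M.Rd s a r = 1)

/-- a trajectory `s₀, a₀, r₀, …, s_T, a_T, r_T, s_{T+1}`. -/
def Traj (M : FinMDP S A Rw) : Type :=
  (Fin (M.T + 2) → S) × (Fin (M.T + 1) → A) × (Fin (M.T + 1) → Rw)

instance (M : FinMDP S A Rw) : Fintype M.Traj :=
  inferInstanceAs (Fintype (_ × _ × _))

variable (M : FinMDP S A Rw)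

/-- state at time `t` (index clamped to the horizon). -/
def st (τ : M.Traj) (t : ℕ) : S := τ.1 ⟨min t (M.T + 1), by omega⟩

/-- action at time `t` (index clamped to the horizon). -/
def ac (τ : M.Traj) (t : ℕ) : A := τ.2.1 ⟨min t M.T, by omega⟩

/-- reward at time `t` (index clamped to the horizon). -/
def rew (τ : M.Traj) (t : ℕ) : ℝ := M.rval (τ.2.2 ⟨min t M.T, by omega⟩)

/-- probability of a trajectory when actions are taken according to `π`. -/
def prob (π : S → A → ℝ) (τ : M.Traj) : ℝ :=
  (if M.st τ 0 = M.s0 then (1:ℝ) else 0) *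
  ∏ t ∈ range (M.T + 1),
    (π (M.st τ t) (M.ac τ t) * M.Rd (M.st τ t) (M.ac τ t) (τ.2.2 ⟨min t M.T, by omega⟩) *
      M.P (M.st τ t) (M.ac τ t) (M.st τ (t + 1)))

/-- discounted return `Σ_{t=0}^T γ^t r_t` of a trajectory. -/
def ret (τ : M.Traj) : ℝ := ∑ t ∈ range (M.T + 1), M.γ ^ t * M.rew τ t

/-- expected return `J(π)`. -/
def J (π : S → A → ℝ) : ℝ := ∑ τ : M.Traj, M.prob π τ * M.ret τ

end FinMDP

section AuxOPE
set_option linter.unusedSectionVars false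

variable {S A Rw : Type} [Fintype S] [Fintype A] [Fintype Rw] [DecidableEq S] [DecidableEq A]

lemma sum_fun_cons {X : Type} [Fintype X] {n : ℕ} (g : (Fin (n+1) → X) → ℝ) :
    ∑ f : Fin (n+1) → X, g f = ∑ x : X, ∑ f : Fin n → X, g (Fin.cons x f) := by
  rw [← Equiv.sum_comp (Fin.consEquiv (fun _ => X)) g, Fintype.sum_prod_type]
  rfl

noncomputable def BS (n : ℕ) (w : ℕ → S → A → Rw → S → ℝ) (s : S)
    (h : (Fin (n+1) → S) → (Fin n → A) → (Fin n → Rw) → ℝ) : ℝ :=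
  ∑ σ : Fin n → S, ∑ α : Fin n → A, ∑ ρ : Fin n → Rw,
    (∏ t : Fin n, w t ((Fin.cons s σ : Fin (n+1) → S) t.castSucc) (α t) (ρ t)
        ((Fin.cons s σ : Fin (n+1) → S) t.succ)) *
      h (Fin.cons s σ) α ρ

lemma BS_succ (n : ℕ) (w : ℕ → S → A → Rw → S → ℝ) (s : S)
    (h : (Fin (n+2) → S) → (Fin (n+1) → A) → (Fin (n+1) → Rw) → ℝ) :
    BS (n+1) w s h = ∑ s' : S, ∑ a : A, ∑ r : Rw, w 0 s a r s' *
      BS n (fun t => w (t+1)) s'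
        (fun σ α ρ => h (Fin.cons s σ) (Fin.cons a α) (Fin.cons r ρ)) := by
  unfold BS
  rw [sum_fun_cons (n := n) (X := S)]
  simp only [sum_fun_cons (n := n) (X := A), sum_fun_cons (n := n) (X := Rw)]
  simp only [Fin.prod_univ_succ, Fin.cons_succ, Fin.cons_zero, Fin.castSucc_zero,
    Fin.succ_zero_eq_one, Fin.cons_one, ← Fin.succ_castSucc, Fin.val_succ]
  simp only [Fin.val_zero, Finset.mul_sum, mul_assoc]
  refine Finset.sum_congr rfl fun x _ => ?_
  rw [Finset.sum_comm]
  refine Finset.sum_congr rfl fun a _ => ?_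
  refine Eq.trans (Finset.sum_congr rfl fun σ _ => Finset.sum_comm) ?_
  rw [Finset.sum_comm]

def StochK (w : ℕ → S → A → Rw → S → ℝ) : Prop :=
  ∀ t s, ∑ s' : S, ∑ a : A, ∑ r : Rw, w t s a r s' = 1

lemma BS_const (n : ℕ) (w : ℕ → S → A → Rw → S → ℝ) (hw : StochK w) (s : S) (c : ℝ) :
    BS n w s (fun _ _ _ => c) = c := by
  induction n generalizing w s with
  | zero => simp [BS]
  | succ n ih =>
    rw [BS_succ]
    have hw' : StochK (fun t => w (t+1)) := fun t s => hw (t+1) s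
    simp only [ih (fun t => w (t+1)) hw', ← Finset.sum_mul]
    rw [hw 0 s, one_mul]

lemma BS_dep0 [Inhabited A] [Inhabited Rw] (n : ℕ) (w : ℕ → S → A → Rw → S → ℝ)
    (hw : StochK w) (s : S)
    (h : (Fin (n+1) → S) → (Fin n → A) → (Fin n → Rw) → ℝ)
    (hdep : ∀ σ α ρ σ' α' ρ', σ 0 = σ' 0 → h σ α ρ = h σ' α' ρ') :
    BS n w s h = h (fun _ => s) (fun _ => default) (fun _ => default) := by
  have key : ∀ σ α ρ, h (Fin.cons s σ) α ρ
      = h (fun _ => s) (fun _ => default) (fun _ => default) := by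
    intro σ α ρ
    exact hdep _ _ _ _ _ _ (by simp)
  calc BS n w s h
      = BS n w s (fun _ _ _ => h (fun _ => s) (fun _ => default) (fun _ => default)) := by
        unfold BS
        refine Finset.sum_congr rfl fun σ _ => Finset.sum_congr rfl fun α _ =>
          Finset.sum_congr rfl fun ρ _ => ?_
        rw [key]
    _ = _ := BS_const n w hw s _

lemma BS_cm [Inhabited A] [Inhabited Rw] (n : ℕ) (k : ℕ)
    (w w' : ℕ → S → A → Rw → S → ℝ) (hw : StochK w) (hw' : StochK w')
    (hag : ∀ t, t < k → w t = w' t)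
    (h : (Fin (n+1) → S) → (Fin n → A) → (Fin n → Rw) → ℝ)
    (hdep : ∀ σ α ρ σ' α' ρ', (∀ i : Fin (n+1), (i:ℕ) ≤ k → σ i = σ' i) →
        (∀ i : Fin n, (i:ℕ) < k → α i = α' i) → (∀ i : Fin n, (i:ℕ) < k → ρ i = ρ' i) →
        h σ α ρ = h σ' α' ρ') (s : S) :
    BS n w s h = BS n w' s h := by
  induction n generalizing k w w' s with
  | zero => simp [BS]
  | succ n ih =>
    cases k with
    | zero =>
      have hd : ∀ σ α ρ σ' α' ρ', σ 0 = σ' 0 → h σ α ρ = h σ' α' ρ' := by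
        intro σ α ρ σ' α' ρ' h0
        refine hdep σ α ρ σ' α' ρ' (fun i hi => ?_) (fun i hi => by omega) (fun i hi => by omega)
        have : i = 0 := Fin.ext (by simpa using Nat.le_zero.mp hi)
        rw [this]; exact h0
      rw [BS_dep0 _ w hw s h hd, BS_dep0 _ w' hw' s h hd]
    | succ k =>
      rw [BS_succ, BS_succ]
      refine Finset.sum_congr rfl fun s' _ => Finset.sum_congr rfl fun a _ =>
        Finset.sum_congr rfl fun r _ => ?_
      rw [hag 0 (Nat.succ_pos k)]
      congr 1
      refine ih k (fun t => w (t+1)) (fun t => w' (t+1)) (fun t s => hw (t+1) s)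
        (fun t s => hw' (t+1) s) (fun t ht => hag (t+1) (by omega)) _ ?_ s'
      intro σ α ρ σ' α' ρ' H1 H2 H3
      refine hdep _ _ _ _ _ _ (fun i hi => ?_) (fun i hi => ?_) (fun i hi => ?_)
      · rcases Fin.eq_zero_or_eq_succ i with rfl | ⟨j, rfl⟩
        · simp
        · simp only [Fin.cons_succ]
          exact H1 j (by simpa [Fin.val_succ] using hi)
      · rcases Fin.eq_zero_or_eq_succ i with rfl | ⟨j, rfl⟩
        · simp
        · simp only [Fin.cons_succ]
          exact H2 j (by simp at hi; omega)
      · rcases Fin.eq_zero_or_eq_succ i with rfl | ⟨j, rfl⟩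
        · simp
        · simp only [Fin.cons_succ]
          exact H3 j (by simp at hi; omega)
open FinMDP in
lemma traj_sum (M : FinMDP S A Rw) (w : ℕ → S → A → Rw → S → ℝ) (f : M.Traj → ℝ) :
    (∑ τ : M.Traj, ((if M.st τ 0 = M.s0 then (1:ℝ) else 0) *
      ∏ t ∈ range (M.T + 1),
        w t (M.st τ t) (M.ac τ t) (τ.2.2 ⟨min t M.T, by omega⟩) (M.st τ (t+1))) * f τ)
      = BS (M.T+1) w M.s0 (fun σ α ρ => f (σ, α, ρ)) := by
  have key : ∀ g : M.Traj → ℝ, ∑ τ : M.Traj, g τ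
      = ∑ σf : Fin (M.T+2) → S, ∑ α : Fin (M.T+1) → A, ∑ ρ : Fin (M.T+1) → Rw,
          g (σf, α, ρ) :=
    fun g => Eq.trans (Fintype.sum_prod_type g)
      (Finset.sum_congr rfl fun σf _ => Fintype.sum_prod_type _)
  rw [key]
  have ieq : ∀ (σf : Fin (M.T+2) → S) (α : Fin (M.T+1) → A) (ρ : Fin (M.T+1) → Rw),
      ((if M.st (σf,α,ρ) 0 = M.s0 then (1:ℝ) else 0) *
        ∏ t ∈ range (M.T + 1),
          w t (M.st (σf,α,ρ) t) (M.ac (σf,α,ρ) t) (ρ ⟨min t M.T, by omega⟩)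
            (M.st (σf,α,ρ) (t+1)))
      = (if σf 0 = M.s0 then (1:ℝ) else 0) *
        ∏ t : Fin (M.T+1), w ↑t (σf t.castSucc) (α t) (ρ t) (σf t.succ) := by
    intro σf α ρ
    unfold FinMDP.st FinMDP.ac
    congr 1
    rw [Finset.prod_range]
    refine Finset.prod_congr rfl fun t _ => ?_
    have ht : (t:ℕ) ≤ M.T := Nat.lt_succ_iff.mp t.isLt
    have h1 : (⟨min ↑t (M.T+1), by omega⟩ : Fin (M.T+2)) = t.castSucc := by
      apply Fin.ext; simp [Nat.min_eq_left (by omega : (t:ℕ) ≤ M.T + 1)]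
    have h2 : (⟨min ↑t M.T, by omega⟩ : Fin (M.T+1)) = t := by
      apply Fin.ext; simp [Nat.min_eq_left ht]
    have h3 : (⟨min (↑t+1) (M.T+1), by omega⟩ : Fin (M.T+2)) = t.succ := by
      apply Fin.ext; simp [Nat.min_eq_left (by omega : (t:ℕ)+1 ≤ M.T + 1)]
    rw [h1, h2, h3]
  simp only [ieq]
  rw [sum_fun_cons (n := M.T+1) (X := S)]
  simp only [Fin.cons_zero, ite_mul, one_mul, zero_mul, Finset.sum_ite_irrel,
    Finset.sum_const_zero, Finset.sum_ite_eq', Finset.mem_univ, if_true]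
  unfold BS
  rfl

open FinMDP in
lemma sum_prob_mul (M : FinMDP S A Rw) (μ : S → A → ℝ) (f : M.Traj → ℝ) :
    ∑ τ : M.Traj, M.prob μ τ * f τ
      = BS (M.T+1) (fun _ s a r s' => μ s a * M.Rd s a r * M.P s a s') M.s0
          (fun σ α ρ => f (σ, α, ρ)) :=
  traj_sum M (fun _ s a r s' => μ s a * M.Rd s a r * M.P s a s') f

open FinMDP in
lemma stoch_of_policy (M : FinMDP S A Rw) (hM : M.Valid) (μ : S → A → ℝ)
    (hμ : IsPolicy μ) :
    StochK (fun (_ : ℕ) s a r s' => μ s a * M.Rd s a r * M.P s a s') := by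
  intro t s
  rw [Finset.sum_comm]
  have h1 : ∀ a, (∑ s' : S, ∑ r : Rw, μ s a * M.Rd s a r * M.P s a s') = μ s a := by
    intro a
    rw [Finset.sum_comm]
    have h2 : ∀ r, (∑ s' : S, μ s a * M.Rd s a r * M.P s a s') = μ s a * M.Rd s a r :=
      fun r => by rw [← Finset.mul_sum, hM.2.1, mul_one]
    rw [Finset.sum_congr rfl fun r _ => h2 r, ← Finset.mul_sum, hM.2.2.2, mul_one]
  rw [Finset.sum_congr rfl fun a _ => h1 a, hμ.2]

lemma aux_div (a b c d : ℝ) (hb : b ≠ 0) : a / b * (b * c * d) = a * c * d := by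
  field_simp

open FinMDP in
lemma prod_ratio_split (n k : ℕ) (hk : k ≤ n) (F G R : ℕ → ℝ)
    (h1 : ∀ x, x < k → G x = R x * F x) (h2 : ∀ x, k ≤ x → G x = F x) :
    (∏ t ∈ range n, F t) * (∏ t ∈ range k, R t) = ∏ t ∈ range n, G t := by
  obtain ⟨m, rfl⟩ : ∃ m, n = k + m := ⟨n - k, by omega⟩
  rw [Finset.prod_range_add, Finset.prod_range_add,
    Finset.prod_congr rfl fun x hx => h1 x (Finset.mem_range.mp hx),
    Finset.prod_congr rfl (fun x _ => h2 (k+x) (by omega)), Finset.prod_mul_distrib]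
  ring

open FinMDP in
lemma mix_eq (M : FinMDP S A Rw) (π π' : S → A → ℝ) (hπpos : ∀ s a, 0 < π s a)
    (k : ℕ) (hk : k ≤ M.T + 1) (τ : M.Traj) :
    M.prob π τ * (∏ t' ∈ range k, π' (M.st τ t') (M.ac τ t') / π (M.st τ t') (M.ac τ t'))
      = (if M.st τ 0 = M.s0 then (1:ℝ) else 0) *
        ∏ t ∈ range (M.T + 1),
          ((if t < k then π' (M.st τ t) (M.ac τ t) else π (M.st τ t) (M.ac τ t)) *
            M.Rd (M.st τ t) (M.ac τ t) (τ.2.2 ⟨min t M.T, by omega⟩) *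
            M.P (M.st τ t) (M.ac τ t) (M.st τ (t+1))) := by
  unfold FinMDP.prob
  rw [mul_assoc]
  congr 1
  refine prod_ratio_split (M.T+1) k hk _ _ _ (fun x hx => ?_) (fun x hx => ?_)
  · rw [if_pos hx]
    exact (aux_div _ _ _ _ (hπpos _ _).ne').symm
  · rw [if_neg (by omega)]

noncomputable def hfun (M : FinMDP S A Rw) (b : S → ℝ) (t : ℕ) (τ : M.Traj) : ℝ :=
  M.rew τ t - b (M.st τ t) + M.γ * (if t < M.T then b (M.st τ (t+1)) else 0)

lemma tele (M : FinMDP S A Rw) (b : S → ℝ) (τ : M.Traj) :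
    ∑ t ∈ range (M.T+1), M.γ^t * hfun M b t τ = M.ret τ - b (M.st τ 0) := by
  have e : ∀ t ∈ range (M.T+1), M.γ^t * hfun M b t τ
      = M.γ^t * M.rew τ t - ((fun u => if u ≤ M.T then M.γ^u * b (M.st τ u) else 0) t
          - (fun u => if u ≤ M.T then M.γ^u * b (M.st τ u) else 0) (t+1)) := by
    intro t ht
    have ht' : t ≤ M.T := by simpa [Nat.lt_succ_iff] using Finset.mem_range.mp ht
    unfold hfun
    simp only []
    by_cases hc : t < M.T
    · rw [if_pos hc, if_pos ht', if_pos (by omega)]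
      ring
    · rw [if_neg hc, if_pos ht', if_neg (by omega)]
      ring
  rw [Finset.sum_congr rfl e, Finset.sum_sub_distrib, Finset.sum_range_sub']
  unfold FinMDP.ret
  norm_num

lemma prob_mul_b (M : FinMDP S A Rw) (μ : S → A → ℝ) (b : S → ℝ) (τ : M.Traj) :
    M.prob μ τ * b (M.st τ 0) = M.prob μ τ * b M.s0 := by
  by_cases h0 : M.st τ 0 = M.s0
  · rw [h0]
  · unfold FinMDP.prob
    rw [if_neg h0, zero_mul, zero_mul, zero_mul]

end AuxOPE

/-- the baseline-corrected IS estimator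
`Ĵ(π') = b(s₀) + Σ_{t=0}^T γ^t ρ_{[0:t]} (r_t − b(s_t) + γ b(s_{t+1}))`
(with the convention `b(s_{T+1}) = 0`) is unbiased for `J(π')` under
trajectories generated by `π`. -/
theorem baseline_OPE_unbiased (M : FinMDP S A Rw) (hM : M.Valid)
    (hγ0 : 0 ≤ M.γ) (hγ1 : M.γ < 1)
    (π π' : S → A → ℝ) (hπ : IsPolicy π) (hπpos : ∀ s a, 0 < π s a) (hπ' : IsPolicy π')
    (b : S → ℝ) :
    ∑ τ : M.Traj, M.prob π τ *
      (b M.s0 + ∑ t ∈ range (M.T + 1), M.γ ^ t *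
        (∏ t' ∈ range (t + 1), π' (M.st τ t') (M.ac τ t') / π (M.st τ t') (M.ac τ t')) *
        (M.rew τ t - b (M.st τ t) + M.γ * (if t < M.T then b (M.st τ (t + 1)) else 0)))
      = M.J π' := by
  have hA : Nonempty A := by
    by_contra hA
    rw [not_nonempty_iff] at hA
    have h1 := hπ.2 M.s0
    rw [Finset.univ_eq_empty, Finset.sum_empty] at h1
    exact one_ne_zero h1.symm
  haveI := Classical.inhabited_of_nonempty hA
  have hRw : Nonempty Rw := by
    by_contra hR
    rw [not_nonempty_iff] at hR
    have h1 := hM.2.2.2 M.s0 default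
    rw [Finset.univ_eq_empty, Finset.sum_empty] at h1
    exact one_ne_zero h1.symm
  haveI := Classical.inhabited_of_nonempty hRw
  have stπ := stoch_of_policy M hM π hπ
  have stπ' := stoch_of_policy M hM π' hπ'
  have norm1 : ∑ τ : M.Traj, M.prob π τ = 1 := by
    have h1 := (sum_prob_mul M π (fun _ => (1:ℝ))).trans
      (BS_const _ _ stπ _ 1)
    simpa using h1
  have norm2 : ∑ τ : M.Traj, M.prob π' τ = 1 := by
    have h1 := (sum_prob_mul M π' (fun _ => (1:ℝ))).trans
      (BS_const _ _ stπ' _ 1)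
    simpa using h1
  have step : ∀ t ∈ range (M.T+1),
      (∑ τ : M.Traj, M.prob π τ * (M.γ ^ t *
          (∏ t' ∈ range (t+1), π' (M.st τ t') (M.ac τ t') / π (M.st τ t') (M.ac τ t')) *
          hfun M b t τ))
        = ∑ τ : M.Traj, M.prob π' τ * (M.γ ^ t * hfun M b t τ) := by
    intro t ht
    have htT : t + 1 ≤ M.T + 1 := by have := Finset.mem_range.mp ht; omega
    calc (∑ τ : M.Traj, M.prob π τ * (M.γ ^ t *
          (∏ t' ∈ range (t+1), π' (M.st τ t') (M.ac τ t') / π (M.st τ t') (M.ac τ t')) *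
          hfun M b t τ))
        = M.γ ^ t * ∑ τ : M.Traj,
            (M.prob π τ * (∏ t' ∈ range (t+1),
              π' (M.st τ t') (M.ac τ t') / π (M.st τ t') (M.ac τ t'))) * hfun M b t τ := by
          rw [Finset.mul_sum]; exact Finset.sum_congr rfl fun τ _ => by ring
      _ = M.γ ^ t * ∑ τ : M.Traj,
            ((if M.st τ 0 = M.s0 then (1:ℝ) else 0) *
              ∏ u ∈ range (M.T + 1),
                ((if u < t+1 then π' (M.st τ u) (M.ac τ u) else π (M.st τ u) (M.ac τ u)) *
                  M.Rd (M.st τ u) (M.ac τ u) (τ.2.2 ⟨min u M.T, by omega⟩) *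
                  M.P (M.st τ u) (M.ac τ u) (M.st τ (u+1)))) * hfun M b t τ := by
          congr 1
          exact Finset.sum_congr rfl fun τ _ => by rw [mix_eq M π π' hπpos (t+1) htT τ]
      _ = M.γ ^ t * BS (M.T+1)
            (fun u s a r s' => (if u < t+1 then π' s a else π s a) * M.Rd s a r * M.P s a s')
            M.s0 (fun σ α ρ => hfun M b t (σ, α, ρ)) := by
          congr 1
          exact traj_sum M
            (fun u s a r s' => (if u < t+1 then π' s a else π s a) * M.Rd s a r * M.P s a s')
            (hfun M b t)
      _ = M.γ ^ t * BS (M.T+1)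
            (fun _ s a r s' => π' s a * M.Rd s a r * M.P s a s')
            M.s0 (fun σ α ρ => hfun M b t (σ, α, ρ)) := by
          congr 1
          refine BS_cm _ (t+1) _ _ ?_ stπ' ?_ _ ?_ _
          · intro u s
            by_cases hu : u < t + 1
            · simp only [if_pos hu]
              exact stπ' u s
            · simp only [if_neg hu]
              exact stπ u s
          · intro u hu
            funext s a r s'
            rw [if_pos hu]
          · intro σ α ρ σ' α' ρ' H1 H2 H3
            show hfun M b t (σ, α, ρ) = hfun M b t (σ', α', ρ')
            unfold hfun FinMDP.rew FinMDP.st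
            dsimp only
            rw [H3 ⟨min t M.T, by omega⟩ (by simpa using (by omega : min t M.T < t + 1)),
              H1 ⟨min t (M.T+1), by omega⟩ (by simpa using (by omega : min t (M.T+1) ≤ t + 1)),
              H1 ⟨min (t+1) (M.T+1), by omega⟩
                (by simpa using (by omega : min (t+1) (M.T+1) ≤ t + 1))]
      _ = ∑ τ : M.Traj, M.prob π' τ * (M.γ ^ t * hfun M b t τ) := by
          rw [show (∑ τ : M.Traj, M.prob π' τ * (M.γ ^ t * hfun M b t τ))
              = M.γ ^ t * ∑ τ : M.Traj, M.prob π' τ * hfun M b t τ from by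
            rw [Finset.mul_sum]; exact Finset.sum_congr rfl fun τ _ => by ring]
          rw [sum_prob_mul M π' (hfun M b t)]
  show ∑ τ : M.Traj, M.prob π τ *
      (b M.s0 + ∑ t ∈ range (M.T + 1), M.γ ^ t *
        (∏ t' ∈ range (t + 1), π' (M.st τ t') (M.ac τ t') / π (M.st τ t') (M.ac τ t')) *
        hfun M b t τ) = M.J π'
  calc ∑ τ : M.Traj, M.prob π τ *
      (b M.s0 + ∑ t ∈ range (M.T + 1), M.γ ^ t *
        (∏ t' ∈ range (t + 1), π' (M.st τ t') (M.ac τ t') / π (M.st τ t') (M.ac τ t')) *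
        hfun M b t τ)
      = (∑ τ : M.Traj, M.prob π τ * b M.s0)
        + ∑ τ : M.Traj, ∑ t ∈ range (M.T + 1), M.prob π τ * (M.γ ^ t *
            (∏ t' ∈ range (t + 1), π' (M.st τ t') (M.ac τ t') / π (M.st τ t') (M.ac τ t')) *
            hfun M b t τ) := by
        rw [← Finset.sum_add_distrib]
        refine Finset.sum_congr rfl fun τ _ => ?_
        rw [mul_add, Finset.mul_sum]
    _ = b M.s0 + ∑ t ∈ range (M.T + 1), ∑ τ : M.Traj, M.prob π τ * (M.γ ^ t *
            (∏ t' ∈ range (t + 1), π' (M.st τ t') (M.ac τ t') / π (M.st τ t') (M.ac τ t')) *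
            hfun M b t τ) := by
        rw [Finset.sum_comm, ← Finset.sum_mul, norm1, one_mul]
    _ = b M.s0 + ∑ t ∈ range (M.T + 1), ∑ τ : M.Traj, M.prob π' τ * (M.γ ^ t * hfun M b t τ) := by
        rw [Finset.sum_congr rfl step]
    _ = b M.s0 + ∑ τ : M.Traj, M.prob π' τ * (M.ret τ - b (M.st τ 0)) := by
        rw [Finset.sum_comm]
        congr 1
        refine Finset.sum_congr rfl fun τ _ => ?_
        rw [← Finset.mul_sum, ← tele M b τ]
    _ = b M.s0 + (M.J π' - b M.s0) := by
        congr 1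
        rw [show (∑ τ : M.Traj, M.prob π' τ * (M.ret τ - b (M.st τ 0)))
            = (∑ τ : M.Traj, M.prob π' τ * M.ret τ) - ∑ τ : M.Traj, M.prob π' τ * b (M.st τ 0)
          from by rw [← Finset.sum_sub_distrib]; exact Finset.sum_congr rfl fun τ _ => mul_sub _ _ _]
        rw [Finset.sum_congr rfl fun τ _ => prob_mul_b M π' b τ, ← Finset.sum_mul, norm2, one_mul]
        rfl
    _ = M.J π' := by ring
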